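/- arXiv:2301.03123 — 2 statements merged into one kernel-verified Lean document; each statement's English description precedes it below -/
import Mathlib

section
/- Let X be a schematic space with structure functor 𝒪. Then for every x ≤ y in X, the restriction ring homomorphism r_{x y} : 𝒪(x) → 𝒪(y) is an epimorphism in the category of commutative rings; equivalently, the multiplication map 𝒪(y) ⊗_{𝒪(x)} 𝒪(y) → 𝒪(y) is bijective. In particular (combined with hypothesis (i)), all restriction morphisms of a schematic space are flat epimorphisms of rings. -/
/-!
STATEMENT 8: For a schematic space `(X, 𝒪)`, every restriction morphism
`r_{x y} : 𝒪(x) → 𝒪(y)` is an epimorphism in the category of commutative rings;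
equivalently, the multiplication map `𝒪(y) ⊗_{𝒪(x)} 𝒪(y) → 𝒪(y)` is bijective.
Combined with schematicity hypothesis (i), all restriction morphisms of a schematic
space are flat epimorphisms of rings.
-/

open CategoryTheory TensorProduct

universe u

variable {X : Type u} [PartialOrder X] (𝒪 : X ⥤ CommRingCat.{u})

/-- The subposet `S = U_x ∩ U_y` of common upper bounds of `x` and `y`. -/
def Sxy (x y : X) : Type u := {z : X // x ≤ z ∧ y ≤ z}

/-- The canonical ring homomorphism `𝒪(x) ⊗_{𝒪(t)} 𝒪(y) → ∏_{z ∈ S} 𝒪(z)`,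
`a ⊗ b ↦ (r_{x z}(a) · r_{y z}(b))_z`. -/
noncomputable def canMap {t x y : X} (htx : t ≤ x) (hty : t ≤ y) :
    letI : Algebra (𝒪.obj t) (𝒪.obj x) := (𝒪.map (homOfLE htx)).hom.toAlgebra
    letI : Algebra (𝒪.obj t) (𝒪.obj y) := (𝒪.map (homOfLE hty)).hom.toAlgebra
    TensorProduct (𝒪.obj t) (𝒪.obj x) (𝒪.obj y) →+* ((z : Sxy x y) → 𝒪.obj z.1) := by
  letI : Algebra (𝒪.obj t) (𝒪.obj x) := (𝒪.map (homOfLE htx)).hom.toAlgebra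
  letI : Algebra (𝒪.obj t) (𝒪.obj y) := (𝒪.map (homOfLE hty)).hom.toAlgebra
  letI : ∀ z : Sxy x y, Algebra (𝒪.obj t) (𝒪.obj z.1) :=
    fun z => (𝒪.map (homOfLE (htx.trans z.2.1))).hom.toAlgebra
  refine (Algebra.TensorProduct.productMap ?_ ?_).toRingHom
  · exact
    { toRingHom := Pi.ringHom fun z => (𝒪.map (homOfLE z.2.1)).hom
      commutes' := fun a => by
        funext z
        show (𝒪.map (homOfLE htx) ≫ 𝒪.map (homOfLE z.2.1)).hom a =
          (𝒪.map (homOfLE (htx.trans z.2.1))).hom a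
        rw [← 𝒪.map_comp]
        all_goals rfl }
  · exact
    { toRingHom := Pi.ringHom fun z => (𝒪.map (homOfLE z.2.2)).hom
      commutes' := fun a => by
        funext z
        show (𝒪.map (homOfLE hty) ≫ 𝒪.map (homOfLE z.2.2)).hom a =
          (𝒪.map (homOfLE (htx.trans z.2.1))).hom a
        rw [← 𝒪.map_comp]
        all_goals rfl }

/-- A faithfully flat algebra has injective structure map. -/
lemma faithfullyFlat_algebraMap_injective (A B : Type*) [CommRing A] [CommRing B] [Algebra A B]
    [Module.FaithfullyFlat A B] : Function.Injective (algebraMap A B) := by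
  rw [injective_iff_map_eq_zero]
  intro a ha
  have hz : LinearMap.lTensor B (LinearMap.lsmul A A a) = 0 := by
    refine TensorProduct.ext' fun b c => ?_
    show b ⊗ₜ[A] (a • c) = 0
    rw [TensorProduct.tmul_smul, TensorProduct.smul_tmul', Algebra.smul_def, ha, zero_mul,
      TensorProduct.zero_tmul]
  have : (LinearMap.lsmul A A a) = 0 :=
    (Module.FaithfullyFlat.zero_iff_lTensor_zero A B _).2 hz
  simpa using congr($this 1)

/-- In a schematic space, all restriction morphisms are (flat) epimorphisms of rings. -/
theorem schematic_restrictions_are_flat_epimorphisms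
    [Finite X]
    -- all stalks are Noetherian
    (noeth : ∀ x : X, IsNoetherianRing (𝒪.obj x))
    -- schematicity (i): all restrictions are flat
    (flat : ∀ {x y : X} (h : x ≤ y), RingHom.Flat ((𝒪.map (homOfLE h)).hom : 𝒪.obj x →+* 𝒪.obj y))
    -- schematicity (ii): the canonical maps to the products are faithfully flat
    (ff : ∀ {t x y : X} (htx : t ≤ x) (hty : t ≤ y),
      letI : Algebra (𝒪.obj t) (𝒪.obj x) := (𝒪.map (homOfLE htx)).hom.toAlgebra
      letI : Algebra (𝒪.obj t) (𝒪.obj y) := (𝒪.map (homOfLE hty)).hom.toAlgebra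
      letI := (canMap 𝒪 htx hty).toAlgebra
      Module.FaithfullyFlat (TensorProduct (𝒪.obj t) (𝒪.obj x) (𝒪.obj y))
        ((z : Sxy x y) → 𝒪.obj z.1))
    {x y : X} (h : x ≤ y) :
    -- `r_{x y}` is an epimorphism in the category of commutative rings ...
    Epi (𝒪.map (homOfLE h)) ∧
    -- ... equivalently, the multiplication map `𝒪(y) ⊗_{𝒪(x)} 𝒪(y) → 𝒪(y)` is bijective
    (letI : Algebra (𝒪.obj x) (𝒪.obj y) := (𝒪.map (homOfLE h)).hom.toAlgebra;
      Function.Bijective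
        (Algebra.TensorProduct.lmul' (S := 𝒪.obj y) (𝒪.obj x) :
          TensorProduct (𝒪.obj x) (𝒪.obj y) (𝒪.obj y) →ₐ[𝒪.obj x] 𝒪.obj y)) := by
  letI : Algebra (𝒪.obj x) (𝒪.obj y) := (𝒪.map (homOfLE h)).hom.toAlgebra
  letI := (canMap 𝒪 h h).toAlgebra
  haveI := ff h h
  have hcaninj : Function.Injective (canMap 𝒪 h h) :=
    faithfullyFlat_algebraMap_injective
      (TensorProduct (𝒪.obj x) (𝒪.obj y) (𝒪.obj y)) ((z : Sxy y y) → 𝒪.obj z.1)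
  -- the canonical map factors through the multiplication map
  have hfac : ∀ u : TensorProduct (𝒪.obj x) (𝒪.obj y) (𝒪.obj y),
      canMap 𝒪 h h u = (Pi.ringHom fun z : Sxy y y => (𝒪.map (homOfLE z.2.1)).hom)
        (Algebra.TensorProduct.lmul' (S := 𝒪.obj y) (𝒪.obj x) u) := by
    intro u
    induction u using TensorProduct.induction_on with
    | zero => simp
    | tmul a b =>
      letI : ∀ z : Sxy y y, Algebra (𝒪.obj x) (𝒪.obj z.1) :=
        fun z => (𝒪.map (homOfLE (h.trans z.2.1))).hom.toAlgebra
      show Algebra.TensorProduct.productMap _ _ (a ⊗ₜ b) = _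
      rw [Algebra.TensorProduct.productMap_apply_tmul, Algebra.TensorProduct.lmul'_apply_tmul]
      funext z
      exact (map_mul (𝒪.map (homOfLE z.2.1)).hom a b).symm
    | add u v hu hv =>
      rw [map_add, map_add, map_add, hu, hv]
  have hmulinj : Function.Injective
      (Algebra.TensorProduct.lmul' (S := 𝒪.obj y) (𝒪.obj x) :
        TensorProduct (𝒪.obj x) (𝒪.obj y) (𝒪.obj y) →ₐ[𝒪.obj x] 𝒪.obj y) := by
    intro u v huv
    apply hcaninj
    rw [hfac, hfac, huv]
  have hbij : Function.Bijective
      (Algebra.TensorProduct.lmul' (S := 𝒪.obj y) (𝒪.obj x) :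
        TensorProduct (𝒪.obj x) (𝒪.obj y) (𝒪.obj y) →ₐ[𝒪.obj x] 𝒪.obj y) := by
    refine ⟨hmulinj, fun b => ⟨b ⊗ₜ 1, ?_⟩⟩
    rw [Algebra.TensorProduct.lmul'_apply_tmul, mul_one]
  refine ⟨?_, hbij⟩
  have htmul : ∀ s : 𝒪.obj y,
      s ⊗ₜ[𝒪.obj x] (1 : 𝒪.obj y) = (1 : 𝒪.obj y) ⊗ₜ[𝒪.obj x] s := by
    intro s
    apply hmulinj
    rw [Algebra.TensorProduct.lmul'_apply_tmul, Algebra.TensorProduct.lmul'_apply_tmul,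
      mul_one, one_mul]
  exact CommRingCat.epi_iff_epi.2
    ((Algebra.isEpi_iff_forall_one_tmul_eq _ _).2 fun s => (htmul s).symm)
end

section
/- Let P be a finite partial order and let (X, φ, F, ψ) be a CommRing-structured P-datum with cylinder Cyl(X) and cylinder structure functor 𝒞 : Cyl(X) ⥤ CommRing. Consider the functor D = 𝒞^op ⋙ Spec : Cyl(X)^op ⥤ LocallyRingedSpace. For each p ∈ P let S(p) be the colimit in the category of locally ringed spaces of the functor (X p)^op ⥤ LocallyRingedSpace, x ↦ Spec(F p (x)); for p ≤ q let S(q) → S(p) be the morphism induced by the cocone whose leg at y ∈ X q is Spec((ψ_{p q})_y) : Spec(F q(y)) → Spec(F p(φ_{p q}(y))) followed by the colimit insertion at φ_{p q}(y); this makes p ↦ S(p) a functor P^op ⥤ LocallyRingedSpace. Then the canonical morphism colim_{p ∈ P^op} S(p) → colim_{Cyl(X)^op} D, induced by the slice inclusion functors (X p)^op → Cyl(X)^op, is an isomorphism of locally ringed spaces. (This is the statement that the cylinder of a datum of schematic spaces and the colimit of the datum represent the same locally ringed space under Spec.) -/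
/-!
STATEMENT 9: For a `CommRing`-structured `P`-datum with cylinder structure functor
`𝒞 : Cyl(X) ⥤ CommRing`, the canonical morphism of locally ringed spaces
`colim_{p ∈ Pᵒᵖ} S(p) ⟶ colim_{Cyl(X)ᵒᵖ} (𝒞ᵒᵖ ⋙ Spec)` induced by the slice inclusions,
where `S(p) = colim_{x ∈ (X p)ᵒᵖ} Spec (F p (x))`, is an isomorphism: the cylinder and the
colimit of the datum represent the same locally ringed space under `Spec`.
-/

open CategoryTheory CategoryTheory.Limits AlgebraicGeometry Opposite

structure PosetDatum (P : Type) [PartialOrder P] (X : P → Type) [∀ p, PartialOrder (X p)] where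
  φ : ∀ {p q : P}, p ≤ q → X q →o X p
  φ_refl : ∀ (p : P) (x : X p), φ (le_refl p) x = x
  φ_trans : ∀ {p q r : P} (hpq : p ≤ q) (hqr : q ≤ r) (z : X r),
      φ (hpq.trans hqr) z = φ hpq (φ hqr z)

variable {P : Type} [PartialOrder P] {X : P → Type} [∀ p, PartialOrder (X p)]

/-- The cylinder of a `P`-datum of posets, as a type. -/
def Cylinder (_D : PosetDatum P X) : Type := Σ p, X p

/-- The point of the cylinder determined by `p : P` and `x : X p`. -/
def Cylinder.mk (D : PosetDatum P X) (p : P) (x : X p) : Cylinder D := Sigma.mk p x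

/-- The cylinder partial order: `(p, x) ≤ (q, y)` iff `p ≤ q` and `x ≤ φ_{p q} y`. -/
instance (D : PosetDatum P X) : PartialOrder (Cylinder D) where
  le a b := ∃ h : Sigma.fst a ≤ Sigma.fst b, Sigma.snd a ≤ D.φ h (Sigma.snd b)
  le_refl a := ⟨le_refl _, by rw [D.φ_refl]⟩
  le_trans a b c := by
    rintro ⟨h1, hx1⟩ ⟨h2, hx2⟩
    exact ⟨h1.trans h2, by
      rw [D.φ_trans h1 h2]
      exact hx1.trans ((D.φ h1).monotone hx2)⟩
  le_antisymm a b := by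
    obtain ⟨p, x⟩ := a
    obtain ⟨q, y⟩ := b
    rintro ⟨h1, hx1⟩ ⟨h2, hx2⟩
    obtain rfl : p = q := le_antisymm h1 h2
    obtain rfl : x = y :=
      le_antisymm (hx1.trans_eq (D.φ_refl p y)) (hx2.trans_eq (D.φ_refl p x))
    rfl

/-- Projections of a cylinder relation. -/
theorem Cylinder.le1 {D : PosetDatum P X} {a b : Cylinder D} (h : a ≤ b) :
    Sigma.fst a ≤ Sigma.fst b :=
  h.elim fun h1 _ => h1

theorem Cylinder.le2 {D : PosetDatum P X} {a b : Cylinder D} (h : a ≤ b) :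
    Sigma.snd a ≤ D.φ (Cylinder.le1 h) (Sigma.snd b) :=
  h.elim fun _ h2 => h2

/-- A `CommRing`-structure on a `P`-datum of posets. -/
structure CStruct (D : PosetDatum P X) (F : ∀ p, X p ⥤ CommRingCat.{0}) where
  ψ : ∀ {p q : P} (h : p ≤ q) (y : X q), (F p).obj (D.φ h y) ⟶ (F q).obj y
  ψ_natural : ∀ {p q : P} (h : p ≤ q) {y y' : X q} (hy : y ≤ y'),
      (F p).map (homOfLE ((D.φ h).monotone hy)) ≫ ψ h y' = ψ h y ≫ (F q).map (homOfLE hy)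
  ψ_refl : ∀ (p : P) (y : X p),
      ψ (le_refl p) y = eqToHom (congrArg (F p).obj (D.φ_refl p y))
  ψ_trans : ∀ {p q r : P} (hpq : p ≤ q) (hqr : q ≤ r) (z : X r),
      ψ (hpq.trans hqr) z =
        eqToHom (congrArg (F p).obj (D.φ_trans hpq hqr z)) ≫ ψ hpq (D.φ hqr z) ≫ ψ hqr z

variable {D : PosetDatum P X} {F : ∀ p, X p ⥤ CommRingCat.{0}}

/-- The cylinder structure functor `𝒞 : Cyl(X) ⥤ CommRing`: on objects `(p, x) ↦ F p (x)`,
on morphisms the cylinder structure maps. -/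
def cylFunctor (S : CStruct D F) : Cylinder D ⥤ CommRingCat.{0} where
  obj a := (F (Sigma.fst a)).obj (Sigma.snd a)
  map {a b} f :=
    (F (Sigma.fst a)).map (homOfLE (Cylinder.le2 (leOfHom f))) ≫
      S.ψ (Cylinder.le1 (leOfHom f)) (Sigma.snd b)
  map_id a := by
    show (F (Sigma.fst a)).map (homOfLE _) ≫ S.ψ (le_refl (Sigma.fst a)) (Sigma.snd a) = _
    rw [S.ψ_refl, ← eqToHom_map, ← CategoryTheory.Functor.map_comp,
      show (homOfLE _ ≫ eqToHom (D.φ_refl (Sigma.fst a) (Sigma.snd a)) :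
        Sigma.snd a ⟶ Sigma.snd a) = 𝟙 _ from Subsingleton.elim _ _,
      CategoryTheory.Functor.map_id]
    exact D.φ_refl _ _
  map_comp {a b c} f g := by
    have h1 : a ≤ b := leOfHom f
    have h2 : b ≤ c := leOfHom g
    show (F (Sigma.fst a)).map (homOfLE _) ≫
        S.ψ ((Cylinder.le1 h1).trans (Cylinder.le1 h2)) (Sigma.snd c) =
      ((F (Sigma.fst a)).map (homOfLE (Cylinder.le2 h1)) ≫
          S.ψ (Cylinder.le1 h1) (Sigma.snd b)) ≫
        ((F (Sigma.fst b)).map (homOfLE (Cylinder.le2 h2)) ≫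
          S.ψ (Cylinder.le1 h2) (Sigma.snd c))
    rw [S.ψ_trans (Cylinder.le1 h1) (Cylinder.le1 h2), ← eqToHom_map]
    slice_rhs 2 3 => rw [← S.ψ_natural (Cylinder.le1 h1) (Cylinder.le2 h2)]
    slice_rhs 1 2 => rw [← CategoryTheory.Functor.map_comp]
    slice_lhs 1 2 => rw [← CategoryTheory.Functor.map_comp]
    simp only [Category.assoc]
    congr 1
    exact D.φ_trans _ _ _

/-- The cylinder structure map of a within-slice relation is the corresponding map of
`F p`. -/
theorem cylFunctor_map_slice (S : CStruct D F) {p : P} {x x' : X p} (hx : x ≤ x')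
    (h : Cylinder.mk D p x ≤ Cylinder.mk D p x') :
    (cylFunctor S).map (homOfLE h) = (F p).map (homOfLE hx) := by
  show (F p).map (homOfLE _) ≫ S.ψ (le_refl p) x' = _
  erw [S.ψ_refl, ← eqToHom_map, ← CategoryTheory.Functor.map_comp]
  · exact congrArg (F p).map (Subsingleton.elim (α := x ⟶ x') _ _)
  · exact D.φ_refl p x'

/-- The cylinder structure map of the relation `(p, φ_{p q} y) ≤ (q, y)` is `(ψ_{p q})_y`. -/
theorem cylFunctor_map_psi (S : CStruct D F) {p q : P} (h : p ≤ q) (y : X q)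
    (hrel : Cylinder.mk D p (D.φ h y) ≤ Cylinder.mk D q y) :
    (cylFunctor S).map (homOfLE hrel) = S.ψ h y := by
  show (F p).map (homOfLE (le_refl (D.φ h y))) ≫ S.ψ h y = S.ψ h y
  simp

/-- The diagram of spectra indexed by the (opposite of the) fiber `X p`. -/
noncomputable def SpecF (F : ∀ p, X p ⥤ CommRingCat.{0}) (p : P) :
    (X p)ᵒᵖ ⥤ LocallyRingedSpace.{0} :=
  (F p).op ⋙ Spec.toLocallyRingedSpace

theorem lRS_eqToHom {R S' : CommRingCat.{0}} (e : R = S') :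
    Spec.locallyRingedSpaceMap (eqToHom e) =
      eqToHom (congrArg Spec.locallyRingedSpaceObj e).symm := by
  subst e
  simp [Spec.locallyRingedSpaceMap_id]

/-- The transition cocone defining `S(q) ⟶ S(p)` for `p ≤ q`: its leg at `y ∈ X q` is
`Spec ((ψ_{p q})_y)` followed by the colimit insertion at `φ_{p q} y`. -/
noncomputable def transCocone (S : CStruct D F) {p q : P} (h : p ≤ q) :
    Cocone (SpecF F q) where
  pt := colimit (SpecF F p)
  ι :=
    { app := fun yy =>
        Spec.toLocallyRingedSpace.map (S.ψ h yy.unop).op ≫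
          colimit.ι (SpecF F p) (op (D.φ h yy.unop))
      naturality := fun yy1 yy2 f => by
        dsimp [SpecF, Spec.toLocallyRingedSpace]
        rw [Category.comp_id, ← Category.assoc, ← Spec.locallyRingedSpaceMap_comp,
          show S.ψ h yy2.unop ≫ (F q).map f.unop =
              (F p).map (homOfLE ((D.φ h).monotone (leOfHom f.unop))) ≫ S.ψ h yy1.unop from
            (S.ψ_natural h (leOfHom f.unop)).symm,
          Spec.locallyRingedSpaceMap_comp, Category.assoc]
        congr 1
        exact colimit.w (SpecF F p) ((homOfLE ((D.φ h).monotone (leOfHom f.unop))).op) }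

/-- The functor `Pᵒᵖ ⥤ LocallyRingedSpace`, `p ↦ S(p) = colim_{x ∈ (X p)ᵒᵖ} Spec (F p x)`,
with transition morphisms induced by the `ψ`'s. -/
noncomputable def Sfun (S : CStruct D F) : Pᵒᵖ ⥤ LocallyRingedSpace.{0} where
  obj pp := colimit (SpecF F pp.unop)
  map {pp qq} f := colimit.desc (SpecF F pp.unop) (transCocone S (leOfHom f.unop))
  map_id pp := by
    apply colimit.hom_ext
    intro yy
    erw [colimit.ι_desc, Category.comp_id]
    dsimp [transCocone, Spec.toLocallyRingedSpace]
    have E : yy = op (D.φ (le_refl pp.unop) yy.unop) := by rw [D.φ_refl]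
    rw [S.ψ_refl, lRS_eqToHom, ← colimit.w (SpecF F pp.unop) (eqToHom E), eqToHom_map]
    rfl
  map_comp {pp qq rr} f g := by
    apply colimit.hom_ext
    intro yy
    erw [colimit.ι_desc, colimit.ι_desc_assoc]
    dsimp only [transCocone]
    refine Eq.trans ?_ (Category.assoc _ _ _).symm
    erw [colimit.ι_desc]
    dsimp only
    rw [show S.ψ (leOfHom (f ≫ g).unop) yy.unop =
        eqToHom (congrArg (F rr.unop).obj
          (D.φ_trans (leOfHom g.unop) (leOfHom f.unop) yy.unop)) ≫
          S.ψ (leOfHom g.unop) (D.φ (leOfHom f.unop) yy.unop) ≫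
          S.ψ (leOfHom f.unop) yy.unop from
      S.ψ_trans (leOfHom g.unop) (leOfHom f.unop) yy.unop]
    have E : op (D.φ (leOfHom g.unop) (D.φ (leOfHom f.unop) yy.unop)) =
        op (D.φ ((leOfHom g.unop).trans (leOfHom f.unop)) yy.unop) :=
      (congrArg op (D.φ_trans (leOfHom g.unop) (leOfHom f.unop) yy.unop)).symm
    erw [op_comp, op_comp, Functor.map_comp, Functor.map_comp, eqToHom_op, eqToHom_map,
      Category.assoc, Category.assoc, ← colimit.w (SpecF F rr.unop) (eqToHom E),
      eqToHom_map]
    rfl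

/-- The colimit diagram of the cylinder: `𝒞ᵒᵖ ⋙ Spec : Cyl(X)ᵒᵖ ⥤ LocallyRingedSpace`. -/
noncomputable def cylSpec (S : CStruct D F) : (Cylinder D)ᵒᵖ ⥤ LocallyRingedSpace.{0} :=
  (cylFunctor S).op ⋙ Spec.toLocallyRingedSpace

/-- The cocone over `SpecF F p` given by the slice inclusion `x ↦ (p, x)` into the
cylinder. -/
noncomputable def sliceCocone (S : CStruct D F) (p : P) : Cocone (SpecF F p) where
  pt := colimit (cylSpec S)
  ι :=
    { app := fun xx => colimit.ι (cylSpec S) (op (Cylinder.mk D p xx.unop))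
      naturality := fun xx1 xx2 f => by
        dsimp
        erw [Category.comp_id]
        have hrel : Cylinder.mk D p xx2.unop ≤ Cylinder.mk D p xx1.unop :=
          ⟨le_refl p, show (xx2.unop : X p) ≤ D.φ (le_refl p) xx1.unop by
            rw [D.φ_refl]; exact leOfHom f.unop⟩
        rw [← colimit.w (cylSpec S) ((homOfLE hrel).op)]
        congr 1
        show Spec.toLocallyRingedSpace.map ((F p).map f.unop).op =
          Spec.toLocallyRingedSpace.map ((cylFunctor S).map (homOfLE hrel)).op
        rw [cylFunctor_map_slice S (leOfHom f.unop) hrel]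
        rfl }

/-- The canonical comparison morphism `colim_{p ∈ Pᵒᵖ} S(p) ⟶ colim_{Cyl(X)ᵒᵖ} (𝒞ᵒᵖ ⋙ Spec)`
induced by the slice inclusions. -/
noncomputable def canonicalComparison (S : CStruct D F) :
    colimit (Sfun S) ⟶ colimit (cylSpec S) :=
  colimit.desc (Sfun S)
    { pt := colimit (cylSpec S)
      ι :=
        { app := fun pp => colimit.desc (SpecF F pp.unop) (sliceCocone S pp.unop)
          naturality := fun pp qq f => by
            dsimp
            erw [Category.comp_id]
            apply colimit.hom_ext
            intro yy
            erw [← Category.assoc]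
            dsimp [Sfun]
            erw [colimit.ι_desc]
            dsimp only [transCocone]
            refine (Category.assoc _ _ _).trans ?_
            erw [colimit.ι_desc, colimit.ι_desc]
            dsimp only [sliceCocone]
            have hrel : Cylinder.mk D qq.unop (D.φ (leOfHom f.unop) yy.unop) ≤
                Cylinder.mk D pp.unop yy.unop :=
              ⟨leOfHom f.unop,
                show D.φ (leOfHom f.unop) yy.unop ≤ D.φ (leOfHom f.unop) yy.unop from
                  le_refl _⟩
            rw [← colimit.w (cylSpec S) ((homOfLE hrel).op)]
            exact congrArg (fun m => m ≫ colimit.ι (cylSpec S)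
                (op (Cylinder.mk D qq.unop (D.φ (leOfHom f.unop) yy.unop))))
              (congrArg (fun m => Spec.toLocallyRingedSpace.map (Quiver.Hom.op m))
                (cylFunctor_map_psi S (leOfHom f.unop) yy.unop hrel).symm) } }

/-- The inverse comparison morphism, induced on each cylinder point `(p, x)` by the
insertion into `S(p)` followed by the insertion into the colimit over `Pᵒᵖ`. -/
noncomputable def inverseComparison (S : CStruct D F) :
    colimit (cylSpec S) ⟶ colimit (Sfun S) :=
  colimit.desc (cylSpec S)
    { pt := colimit (Sfun S)
      ι :=
        { app := fun aa =>
            colimit.ι (SpecF F aa.unop.fst) (op aa.unop.snd) ≫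
              colimit.ι (Sfun S) (op aa.unop.fst)
          naturality := fun aa bb f => by
            dsimp
            rw [Category.comp_id]
            have h : bb.unop ≤ aa.unop := leOfHom f.unop
            have h1 : bb.unop.fst ≤ aa.unop.fst := Cylinder.le1 h
            have h2 : bb.unop.snd ≤ D.φ h1 aa.unop.snd := Cylinder.le2 h
            have key : (cylSpec S).map f =
                Spec.toLocallyRingedSpace.map (S.ψ h1 aa.unop.snd).op ≫
                  (SpecF F bb.unop.fst).map ((homOfLE h2).op) := by
              show Spec.toLocallyRingedSpace.map ((cylFunctor S).map f.unop).op = _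
              rw [show (cylFunctor S).map f.unop =
                  (F bb.unop.fst).map (homOfLE h2) ≫ S.ψ h1 aa.unop.snd from rfl]
              erw [op_comp, Functor.map_comp]
              rfl
            erw [key, Category.assoc, ← Category.assoc ((SpecF F bb.unop.fst).map _),
              colimit.w (SpecF F bb.unop.fst) ((homOfLE h2).op)]
            have hmap : colimit.ι (SpecF F aa.unop.fst) (op aa.unop.snd) ≫
                (Sfun S).map ((homOfLE h1).op) =
                Spec.toLocallyRingedSpace.map (S.ψ h1 aa.unop.snd).op ≫
                  colimit.ι (SpecF F bb.unop.fst) (op (D.φ h1 aa.unop.snd)) := by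
              dsimp [Sfun]
              erw [colimit.ι_desc]
              rfl
            erw [← Category.assoc, ← hmap, Category.assoc,
              colimit.w (Sfun S) ((homOfLE h1).op)] } }

/-- The cylinder of a datum of schematic spaces and the colimit of the datum represent the
same locally ringed space: the canonical comparison morphism is an isomorphism. -/
theorem canonicalComparison_isIso
    (hP : Finite P) (hX : ∀ p, Finite (X p)) (S : CStruct D F) :
    IsIso (canonicalComparison S) := by
  refine ⟨inverseComparison S, ?_, ?_⟩
  · apply colimit.hom_ext
    intro pp
    rw [← Category.assoc, Category.comp_id]
    dsimp [canonicalComparison]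
    rw [colimit.ι_desc]
    apply colimit.hom_ext
    intro xx
    erw [← Category.assoc, colimit.ι_desc]
    dsimp [sliceCocone, inverseComparison]
    erw [colimit.ι_desc]
    rfl
  · apply colimit.hom_ext
    intro aa
    rw [← Category.assoc, Category.comp_id]
    dsimp [inverseComparison]
    rw [colimit.ι_desc]
    dsimp
    erw [Category.assoc]
    dsimp [canonicalComparison]
    erw [colimit.ι_desc]
    dsimp
    erw [colimit.ι_desc]
    rfl
end
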